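/- Let n ≥ 1 and p ≥ 1. Let E be a real symmetric n×n matrix with vanishing trace and let α be a totally antisymmetric map on p-tuples of indices from {1,…,n}. Then |∑_{i,j,i₂,…,i_p=1}^{n} E_{ij} α(i,i₂,…,i_p) α(j,i₂,…,i_p)| ≤ √((n−1)/n) · ‖E‖_F · |α|². -/

import Mathlib

/-- The pointwise bound on the traceless-Ricci contraction of a totally
antisymmetric `p`-form used in deriving (4.6):
`|∑ E_ij α(i,i₂,…,i_p) α(j,i₂,…,i_p)| ≤ √((n-1)/n) ‖E‖_F |α|²`. -/
theorem stmt_8 (n p : ℕ) (hn : 1 ≤ n) (hp : 1 ≤ p)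
    (E : Matrix (Fin n) (Fin n) ℝ) (hsymm : ∀ i j, E i j = E j i)
    (htrace : ∑ i, E i i = 0)
    (α : (Fin p → Fin n) → ℝ)
    (hanti : ∀ (I : Fin p → Fin n) (k l : Fin p), k ≠ l →
      α (I ∘ Equiv.swap k l) = -α I) :
    |∑ I : Fin p → Fin n, ∑ j : Fin n,
        E (I ⟨0, hp⟩) j * α I * α (Function.update I ⟨0, hp⟩ j)| ≤
      Real.sqrt (((n : ℝ) - 1) / n) * Real.sqrt (∑ i, ∑ j, (E i j) ^ 2) *
        ∑ I : Fin p → Fin n, (α I) ^ 2 := by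
  classical
  set z : Fin p := ⟨0, hp⟩ with hz
  set t : ℝ := ∑ I : Fin p → Fin n, (α I)^2 with ht
  set G : Fin n → Fin n → ℝ :=
    fun i j => ∑ I : Fin p → Fin n,
      α (Function.update I z i) * α (Function.update I z j) with hG
  have ht0 : 0 ≤ t := Finset.sum_nonneg fun I _ => sq_nonneg _
  have hn0 : (0:ℝ) < n := by exact_mod_cast hn
  have hn1 : (1:ℝ) ≤ n := by exact_mod_cast hn
  -- the key involution on pairs
  have hinv : Function.Involutive
      (fun q : Fin n × (Fin p → Fin n) => (q.2 z, Function.update q.2 z q.1)) := by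
    rintro ⟨i, I⟩
    simp
  set e := hinv.toPerm with he
  have he_apply : ∀ q : Fin n × (Fin p → Fin n),
      e q = (q.2 z, Function.update q.2 z q.1) := fun q => rfl
  -- trace of G
  have htr : ∑ i, G i i = n * t := by
    have h1 : ∑ i, G i i
        = ∑ q : Fin n × (Fin p → Fin n), (α (Function.update q.2 z q.1))^2 := by
      rw [Fintype.sum_prod_type]
      simp [hG, sq]
    rw [h1, ← Equiv.sum_comp e
      (fun q : Fin n × (Fin p → Fin n) => (α (Function.update q.2 z q.1))^2)]
    have h2 : ∀ q : Fin n × (Fin p → Fin n),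
        (α (Function.update (e q).2 z (e q).1))^2 = (α q.2)^2 := by
      rintro ⟨i, I⟩
      simp [he_apply]
    rw [Fintype.sum_congr _ _ h2, Fintype.sum_prod_type]
    simp [ht, Finset.sum_const, mul_comm]
  -- main identity : n * S = ∑ E G
  have hmain : ∑ i, ∑ j, E i j * G i j
      = n * ∑ I : Fin p → Fin n, ∑ j : Fin n,
          E (I z) j * α I * α (Function.update I z j) := by
    have h1 : ∑ i, ∑ j, E i j * G i j
        = ∑ q : Fin n × (Fin p → Fin n), ∑ j,
            E q.1 j * (α (Function.update q.2 z q.1) * α (Function.update q.2 z j)) := by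
      rw [Fintype.sum_prod_type]
      congr 1; ext i
      rw [Finset.sum_comm]
      congr 1; ext j
      rw [hG, Finset.mul_sum]
    rw [h1, ← Equiv.sum_comp e (fun q : Fin n × (Fin p → Fin n) => ∑ j,
      E q.1 j * (α (Function.update q.2 z q.1) * α (Function.update q.2 z j)))]
    have h2 : ∀ q : Fin n × (Fin p → Fin n),
        (∑ j, E (e q).1 j * (α (Function.update (e q).2 z (e q).1)
          * α (Function.update (e q).2 z j)))
        = ∑ j, E (q.2 z) j * α q.2 * α (Function.update q.2 z j) := by
      rintro ⟨i, I⟩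
      simp only [he_apply]
      congr 1; ext j
      simp [Function.update_idem, mul_assoc]
    rw [Fintype.sum_congr _ _ h2, Fintype.sum_prod_type]
    simp [Finset.sum_const, mul_comm]
  -- symmetry/CS per entry: G i j ^ 2 ≤ G i i * G j j
  have hCS : ∀ i j, (G i j)^2 ≤ G i i * G j j := by
    intro i j
    have := Finset.sum_mul_sq_le_sq_mul_sq Finset.univ
      (fun I : Fin p → Fin n => α (Function.update I z i))
      (fun I : Fin p → Fin n => α (Function.update I z j))
    simpa [hG, sq] using this
  have hGdiag : ∀ i, 0 ≤ G i i := by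
    intro i
    apply Finset.sum_nonneg
    intro I _
    exact mul_self_nonneg _
  -- sum of squares of G bounded by (trace)^2
  have hG2 : ∑ i, ∑ j, (G i j)^2 ≤ (n * t)^2 := by
    calc ∑ i, ∑ j, (G i j)^2 ≤ ∑ i, ∑ j, G i i * G j j := by
          apply Finset.sum_le_sum; intro i _
          apply Finset.sum_le_sum; intro j _
          exact hCS i j
      _ = (∑ i, G i i) * (∑ j, G j j) := by
          rw [← Finset.sum_mul_sum]
      _ = (n * t)^2 := by rw [htr]; ring
  -- define D
  set D : Fin n → Fin n → ℝ := fun i j => G i j - (if i = j then t else 0) with hD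
  have hED : ∑ i, ∑ j, E i j * G i j = ∑ i, ∑ j, E i j * D i j := by
    simp only [hD, mul_sub, Finset.sum_sub_distrib]
    have : ∑ i, ∑ j, E i j * (if i = j then t else 0) = 0 := by
      have : ∀ i : Fin n, ∑ j, E i j * (if i = j then t else 0) = E i i * t := by
        intro i
        rw [Finset.sum_eq_single i] <;> simp +contextual [eq_comm]
      rw [Finset.sum_congr rfl fun i _ => this i, ← Finset.sum_mul, htrace, zero_mul]
    rw [this, sub_zero]
  have hD2 : ∑ i, ∑ j, (D i j)^2 ≤ ((n:ℝ) * (n-1)) * t^2 := by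
    have expand : ∑ i, ∑ j, (D i j)^2
        = ∑ i, ∑ j, (G i j)^2 - 2 * t * (∑ i, G i i) + n * t^2 := by
      have h1 : ∀ i j : Fin n, (D i j)^2
          = (G i j)^2 - 2 * (G i j * (if i = j then t else 0))
            + (if i = j then t^2 else 0) := by
        intro i j
        by_cases h : i = j <;> simp [hD, h] <;> ring
      simp only [h1, Finset.sum_add_distrib, Finset.sum_sub_distrib]
      congr 1
      · congr 1
        have h2 : ∀ i : Fin n, ∑ j, 2 * (G i j * (if i = j then t else 0))
            = 2 * t * G i i := by
          intro i
          rw [Finset.sum_eq_single i]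
          · simp; ring
          · intro b _ hb
            simp [Ne.symm hb]
          · simp
        rw [Finset.sum_congr rfl fun i _ => h2 i, ← Finset.mul_sum]
      · simp [Finset.sum_ite_eq, mul_comm]
    rw [expand, htr]
    nlinarith [hG2]
  -- Cauchy-Schwarz on pairs
  set S : ℝ := ∑ I : Fin p → Fin n, ∑ j : Fin n,
      E (I z) j * α I * α (Function.update I z j) with hS
  have habs : |(n:ℝ) * S| ≤ Real.sqrt (∑ i, ∑ j, (E i j)^2) * Real.sqrt (∑ i, ∑ j, (D i j)^2) := by
    rw [← hmain, hED]
    have key := Real.sum_mul_le_sqrt_mul_sqrt Finset.univ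
      (fun q : Fin n × Fin n => E q.1 q.2) (fun q : Fin n × Fin n => D q.1 q.2)
    have key' := Real.sum_mul_le_sqrt_mul_sqrt Finset.univ
      (fun q : Fin n × Fin n => E q.1 q.2) (fun q : Fin n × Fin n => -D q.1 q.2)
    rw [abs_le]
    constructor
    · have : ∑ i, ∑ j, E i j * (-D i j) ≤ Real.sqrt (∑ i, ∑ j, (E i j)^2) * Real.sqrt (∑ i, ∑ j, (D i j)^2) := by
        simpa [Fintype.sum_prod_type, neg_pow] using key'
      have h2 : ∑ i, ∑ j, E i j * (-D i j) = -∑ i, ∑ j, E i j * D i j := by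
        simp [Finset.sum_neg_distrib, mul_neg]
      linarith [this, h2.symm.le]
    · simpa [Fintype.sum_prod_type] using key
  -- bound the D-term
  have hDle : Real.sqrt (∑ i, ∑ j, (D i j)^2) ≤ Real.sqrt ((n:ℝ) * (n-1)) * t := by
    rw [show Real.sqrt ((n:ℝ)*(n-1)) * t = Real.sqrt ((n:ℝ)*(n-1)*t^2) by
      rw [Real.sqrt_mul (by nlinarith [hn1] : (0:ℝ) ≤ (n:ℝ)*(n-1)), Real.sqrt_sq ht0]]
    exact Real.sqrt_le_sqrt hD2
  -- put it together
  have hEn : 0 ≤ Real.sqrt (∑ i, ∑ j, (E i j)^2) := Real.sqrt_nonneg _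
  have hfinal : |(n:ℝ) * S| ≤ Real.sqrt (∑ i, ∑ j, (E i j)^2) * (Real.sqrt ((n:ℝ)*(n-1)) * t) := by
    calc |(n:ℝ)*S| ≤ _ := habs
      _ ≤ _ := by exact mul_le_mul_of_nonneg_left hDle hEn
  have hsqrt : Real.sqrt ((n:ℝ)*(n-1)) = Real.sqrt (((n:ℝ)-1)/n) * n := by
    rw [show (n:ℝ)*(n-1) = ((n:ℝ)-1)/n * n^2 by field_simp,
      Real.sqrt_mul (div_nonneg (by linarith) hn0.le : (0:ℝ) ≤ ((n:ℝ)-1)/n), Real.sqrt_sq hn0.le]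
  have hlast : |S| * n ≤ (Real.sqrt (((n:ℝ)-1)/n) * Real.sqrt (∑ i, ∑ j, (E i j)^2) * t) * n := by
    calc |S| * n = |(n:ℝ) * S| := by rw [abs_mul, abs_of_nonneg hn0.le]; ring
      _ ≤ _ := hfinal
      _ = _ := by rw [hsqrt]; ring
  exact le_of_mul_le_mul_right hlast hn0
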